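/- Let ℓ be a prime, g ≥ 1, and let H_m = {M ∈ GSp_{2g}(ℤ/ℓ^m ℤ) : tr M = 0}. Then #H_1 ≤ #GSp_{2g}(𝔽_ℓ)/ℓ · C for an absolute constant C depending only on g; equivalently, the proportion of trace-zero elements of GSp_{2g}(𝔽_ℓ) is O(1/ℓ). -/
import Mathlib


/-- The standard symplectic form matrix `J` on a rank-`2g` module. -/
def symplJ (g : ℕ) (R : Type*) [CommRing R] :
    Matrix (Fin g ⊕ Fin g) (Fin g ⊕ Fin g) R :=
  Matrix.fromBlocks 0 1 (-1) 0

/-- The set of symplectic similitudes `GSp_{2g}` over `R`. -/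
def GSpSet (g : ℕ) (R : Type*) [CommRing R] :
    Set (Matrix (Fin g ⊕ Fin g) (Fin g ⊕ Fin g) R) :=
  {M | ∃ ν : Rˣ, M.transpose * symplJ g R * M = (ν : R) • symplJ g R}

namespace GspAux

open Matrix

/-! ### Generic counting lemmas -/

/-- If a one-parameter group `u : ZMod ℓ → α` acts on `G` by right multiplication, and each
orbit meets `X` in at most one point, then `ℓ * #X ≤ #G`. -/
lemma count_aux {α : Type*} [Monoid α] [Finite α] {ℓ : ℕ} [NeZero ℓ]
    (G X : Set α) (hXG : X ⊆ G) (u : ZMod ℓ → α)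
    (hmul : ∀ t s, u t * u s = u (t + s)) (hu0 : u 0 = 1)
    (hclosed : ∀ M ∈ G, ∀ t, M * u t ∈ G)
    (hsub : ∀ M ∈ G, {t | M * u t ∈ X}.Subsingleton) :
    ℓ * X.ncard ≤ G.ncard := by
  have hcancel : ∀ (M : α) (t : ZMod ℓ), M * u t * u (-t) = M := by
    intro M t
    rw [mul_assoc, hmul, add_neg_cancel, hu0, mul_one]
  set f : X × ZMod ℓ → G := fun p => ⟨(p.1 : α) * u p.2, hclosed _ (hXG p.1.2) p.2⟩ with hf
  have hinj : Function.Injective f := by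
    rintro ⟨⟨M, hM⟩, t⟩ ⟨⟨M', hM'⟩, t'⟩ h
    have h' : M * u t = M' * u t' := congrArg Subtype.val h
    have hMM' : M = M' * u (t' - t) := by
      have := congrArg (· * u (-t)) h'
      simpa [hcancel, mul_assoc, hmul, sub_eq_add_neg, add_comm] using this
    have htt : t' - t = (0 : ZMod ℓ) := by
      refine hsub M' (hXG hM') ?_ ?_
      · show M' * u (t' - t) ∈ X
        rw [← hMM']; exact hM
      · show M' * u 0 ∈ X
        rw [hu0, mul_one]; exact hM'
    have ht : t = t' := (sub_eq_zero.mp htt).symm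
    subst ht
    have hM2 : M = M' := by
      have := congrArg (· * u (-t)) h'
      simpa [hcancel] using this
    simp [Prod.ext_iff, Subtype.ext_iff, hM2]
  have hcard := Nat.card_le_card_of_injective f hinj
  have h1 : Nat.card (X × ZMod ℓ) = ℓ * X.ncard := by
    rw [Nat.card_prod, Nat.card_zmod, Nat.card_coe_set_eq, mul_comm]
  have h2 : Nat.card G = G.ncard := Nat.card_coe_set_eq G
  rw [h1, h2] at hcard
  omega

lemma ncard_biUnion_le {α ι : Type*} [Finite α] (s : Finset ι) (P : ι → Set α) :
    (⋃ i ∈ s, P i).ncard ≤ ∑ i ∈ s, (P i).ncard := by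
  classical
  induction s using Finset.induction with
  | empty => simp
  | @insert a s ha ih =>
    rw [Finset.sum_insert ha, Finset.set_biUnion_insert]
    exact le_trans (Set.ncard_union_le _ _) (by gcongr)

lemma ncard_le_sum_of_cover {α ι : Type*} [Finite α] [Fintype ι] (X : Set α) (P : ι → Set α)
    (hcov : X ⊆ ⋃ i, P i) : X.ncard ≤ ∑ i, (P i).ncard := by
  classical
  refine le_trans (Set.ncard_le_ncard ?_ (Set.toFinite _)) (ncard_biUnion_le Finset.univ P)
  simpa using hcov

/-! ### Matrix block helpers -/

variable {g : ℕ} {R : Type*} [CommRing R]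

lemma trace_fromBlocks' (A B C D : Matrix (Fin g) (Fin g) R) :
    (Matrix.fromBlocks A B C D).trace = A.trace + D.trace := by
  simp [Matrix.trace, Matrix.diag, Fintype.sum_sum_type, Matrix.fromBlocks]

lemma trace_eq_blocks (M : Matrix (Fin g ⊕ Fin g) (Fin g ⊕ Fin g) R) :
    M.trace = M.toBlocks₁₁.trace + M.toBlocks₂₂.trace := by
  conv_lhs => rw [← Matrix.fromBlocks_toBlocks M]
  rw [trace_fromBlocks']

lemma trace_mul_stdBasis (C : Matrix (Fin g) (Fin g) R) (j k : Fin g) :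
    (C * Matrix.single j k (1:R)).trace = C k j := by
  simp [Matrix.trace, Matrix.diag, Matrix.mul_apply, Matrix.single, ite_and]

lemma mul_stdBasis_apply (C : Matrix (Fin g) (Fin g) R) (j k a b : Fin g) :
    (C * Matrix.single j k (1:R)) a b = if b = k then C a j else 0 := by
  simp [Matrix.mul_apply, Matrix.single, ite_and, eq_comm]

lemma stdBasis_symm (j k : Fin g) :
    (Matrix.single j k (1:R) + Matrix.single k j (1:R))ᵀ
      = Matrix.single j k (1:R) + Matrix.single k j (1:R) := by
  ext a b
  simp only [Matrix.transpose_apply, Matrix.add_apply, Matrix.single, Matrix.of_apply]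
  rw [add_comm]
  congr 2 <;> simp [and_comm, eq_comm]

/-! ### Unipotent one-parameter subgroups -/

/-- upper unipotent nilpotent part -/
def upN (E : Matrix (Fin g) (Fin g) R) : Matrix (Fin g ⊕ Fin g) (Fin g ⊕ Fin g) R :=
  Matrix.fromBlocks 0 E 0 0

/-- lower unipotent nilpotent part -/
def loN (F : Matrix (Fin g) (Fin g) R) : Matrix (Fin g ⊕ Fin g) (Fin g ⊕ Fin g) R :=
  Matrix.fromBlocks 0 0 F 0

lemma upN_sq (E E' : Matrix (Fin g) (Fin g) R) : upN E * upN E' = 0 := by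
  simp [upN, Matrix.fromBlocks_multiply]

lemma loN_sq (F F' : Matrix (Fin g) (Fin g) R) : loN F * loN F' = 0 := by
  simp [loN, Matrix.fromBlocks_multiply]

lemma upN_sympl (E : Matrix (Fin g) (Fin g) R) (hE : Eᵀ = E) :
    (upN E)ᵀ * symplJ g R + symplJ g R * upN E = 0 ∧ (upN E)ᵀ * symplJ g R * upN E = 0 := by
  constructor <;>
  · simp [upN, symplJ, Matrix.fromBlocks_transpose, Matrix.fromBlocks_multiply,
      Matrix.fromBlocks_add, hE]

lemma loN_sympl (F : Matrix (Fin g) (Fin g) R) (hF : Fᵀ = F) :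
    (loN F)ᵀ * symplJ g R + symplJ g R * loN F = 0 ∧ (loN F)ᵀ * symplJ g R * loN F = 0 := by
  constructor <;>
  · simp [loN, symplJ, Matrix.fromBlocks_transpose, Matrix.fromBlocks_multiply,
      Matrix.fromBlocks_add, hF]

/-- one-parameter subgroup -/
def uf (N : Matrix (Fin g ⊕ Fin g) (Fin g ⊕ Fin g) R) (t : R) :
    Matrix (Fin g ⊕ Fin g) (Fin g ⊕ Fin g) R := 1 + t • N

lemma uf_zero (N : Matrix (Fin g ⊕ Fin g) (Fin g ⊕ Fin g) R) : uf N 0 = 1 := by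
  simp [uf]

lemma uf_mul (N : Matrix (Fin g ⊕ Fin g) (Fin g ⊕ Fin g) R) (hN : N * N = 0) (t s : R) :
    uf N t * uf N s = uf N (t + s) := by
  simp only [uf, add_mul, mul_add, one_mul, mul_one, Matrix.smul_mul, Matrix.mul_smul, hN,
    smul_zero, add_smul]
  abel

lemma uf_sympl (N : Matrix (Fin g ⊕ Fin g) (Fin g ⊕ Fin g) R)
    (h1 : Nᵀ * symplJ g R + symplJ g R * N = 0)
    (h2 : Nᵀ * symplJ g R * N = 0) (t : R) :
    (uf N t)ᵀ * symplJ g R * uf N t = symplJ g R := by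
  have h1' : Nᵀ * symplJ g R = -(symplJ g R * N) := by linear_combination (norm := noncomm_ring) h1
  simp only [uf, Matrix.transpose_add, Matrix.transpose_one, Matrix.transpose_smul,
    add_mul, mul_add, one_mul, mul_one, Matrix.smul_mul, Matrix.mul_smul, h1', h2, smul_zero]
  have h3 : -(symplJ g R * N) * N = 0 := by rw [← h1']; exact h2
  rw [h3]
  simp

lemma mem_GSp_mul_uf {M : Matrix (Fin g ⊕ Fin g) (Fin g ⊕ Fin g) R}
    (hM : M ∈ GSpSet g R) {N : Matrix (Fin g ⊕ Fin g) (Fin g ⊕ Fin g) R}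
    (hu : ∀ t : R, (uf N t)ᵀ * symplJ g R * uf N t = symplJ g R) (t : R) :
    M * uf N t ∈ GSpSet g R := by
  obtain ⟨ν, hν⟩ := hM
  refine ⟨ν, ?_⟩
  calc (M * uf N t)ᵀ * symplJ g R * (M * uf N t)
      = (uf N t)ᵀ * (Mᵀ * symplJ g R * M) * uf N t := by
        rw [Matrix.transpose_mul]; noncomm_ring
    _ = (ν : R) • ((uf N t)ᵀ * symplJ g R * uf N t) := by
        rw [hν, mul_smul_comm, smul_mul_assoc]
    _ = (ν : R) • symplJ g R := by rw [hu t]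

lemma mul_uf_up (M : Matrix (Fin g ⊕ Fin g) (Fin g ⊕ Fin g) R) (E : Matrix (Fin g) (Fin g) R)
    (t : R) : M * uf (upN E) t
      = Matrix.fromBlocks (M.toBlocks₁₁) (M.toBlocks₁₂ + t • (M.toBlocks₁₁ * E))
          (M.toBlocks₂₁) (M.toBlocks₂₂ + t • (M.toBlocks₂₁ * E)) := by
  conv_lhs => rw [← Matrix.fromBlocks_toBlocks M]
  simp [uf, upN, mul_add, Matrix.fromBlocks_multiply, Matrix.fromBlocks_add,
    Matrix.fromBlocks_smul]

lemma mul_uf_lo (M : Matrix (Fin g ⊕ Fin g) (Fin g ⊕ Fin g) R) (F : Matrix (Fin g) (Fin g) R)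
    (t : R) : M * uf (loN F) t
      = Matrix.fromBlocks (M.toBlocks₁₁ + t • (M.toBlocks₁₂ * F)) (M.toBlocks₁₂)
          (M.toBlocks₂₁ + t • (M.toBlocks₂₂ * F)) (M.toBlocks₂₂) := by
  conv_lhs => rw [← Matrix.fromBlocks_toBlocks M]
  simp [uf, loN, mul_add, Matrix.fromBlocks_multiply, Matrix.fromBlocks_add,
    Matrix.fromBlocks_smul]

/-- If `M ∈ GSp` has vanishing lower-right block, its lower-left block is invertible. -/
lemma blocks21_inv {M : Matrix (Fin g ⊕ Fin g) (Fin g ⊕ Fin g) R}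
    (hM : M ∈ GSpSet g R) (hD : M.toBlocks₂₂ = 0) :
    ∃ C' : Matrix (Fin g) (Fin g) R, C' * M.toBlocks₂₁ = 1 := by
  obtain ⟨ν, hν⟩ := hM
  set A := M.toBlocks₁₁; set B := M.toBlocks₁₂; set C := M.toBlocks₂₁
  rw [← Matrix.fromBlocks_toBlocks M, hD] at hν
  rw [Matrix.fromBlocks_transpose] at hν
  simp only [symplJ, Matrix.fromBlocks_multiply] at hν
  have h12 := congrArg Matrix.toBlocks₁₂ hν
  simp only [Matrix.fromBlocks_smul, Matrix.toBlocks_fromBlocks₁₂, smul_zero,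
    Matrix.mul_zero, Matrix.mul_one, Matrix.zero_mul, Matrix.mul_neg, zero_add, add_zero,
    Matrix.mul_zero, Matrix.transpose_zero] at h12
  have key : Cᵀ * B = (-(ν : R)) • 1 := by
    rw [neg_smul, ← h12, Matrix.neg_mul, neg_neg]
  have h1 : Cᵀ * (((-(ν⁻¹ : Rˣ)) : R) • B) = 1 := by
    rw [Matrix.mul_smul, key, smul_smul]
    simp
  have h2 : (((-(ν⁻¹ : Rˣ)) : R) • B) * Cᵀ = 1 := mul_eq_one_comm.mp h1
  refine ⟨(((-(ν⁻¹ : Rˣ)) : R) • B)ᵀ, ?_⟩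
  have := congrArg Matrix.transpose h2
  rw [Matrix.transpose_mul, Matrix.transpose_transpose, Matrix.transpose_one] at this
  exact mul_eq_one_comm.mp this


lemma stdBasis_diag_symm (k : Fin g) :
    (Matrix.single k k (1:R))ᵀ = Matrix.single k k (1:R) := by
  ext a b
  simp [Matrix.transpose_apply, Matrix.single, and_comm]

lemma trace_mul_uf_up (M : Matrix (Fin g ⊕ Fin g) (Fin g ⊕ Fin g) R)
    (E : Matrix (Fin g) (Fin g) R) (t : R) :
    (M * uf (upN E) t).trace = M.trace + t * (M.toBlocks₂₁ * E).trace := by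
  rw [mul_uf_up, trace_fromBlocks', Matrix.trace_add, Matrix.trace_smul, smul_eq_mul,
    trace_eq_blocks M]
  ring

lemma toBlocks21_mul_uf_up (M : Matrix (Fin g ⊕ Fin g) (Fin g ⊕ Fin g) R)
    (E : Matrix (Fin g) (Fin g) R) (t : R) :
    (M * uf (upN E) t).toBlocks₂₁ = M.toBlocks₂₁ := by
  rw [mul_uf_up, Matrix.toBlocks_fromBlocks₂₁]

lemma toBlocks22_mul_uf_up (M : Matrix (Fin g ⊕ Fin g) (Fin g ⊕ Fin g) R)
    (E : Matrix (Fin g) (Fin g) R) (t : R) :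
    (M * uf (upN E) t).toBlocks₂₂ = M.toBlocks₂₂ + t • (M.toBlocks₂₁ * E) := by
  rw [mul_uf_up, Matrix.toBlocks_fromBlocks₂₂]

lemma toBlocks21_mul_uf_lo (M : Matrix (Fin g ⊕ Fin g) (Fin g ⊕ Fin g) R)
    (F : Matrix (Fin g) (Fin g) R) (t : R) :
    (M * uf (loN F) t).toBlocks₂₁ = M.toBlocks₂₁ + t • (M.toBlocks₂₂ * F) := by
  rw [mul_uf_lo, Matrix.toBlocks_fromBlocks₂₁]

lemma toBlocks22_mul_uf_lo (M : Matrix (Fin g ⊕ Fin g) (Fin g ⊕ Fin g) R)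
    (F : Matrix (Fin g) (Fin g) R) (t : R) :
    (M * uf (loN F) t).toBlocks₂₂ = M.toBlocks₂₂ := by
  rw [mul_uf_lo, Matrix.toBlocks_fromBlocks₂₂]

section Pieces

variable {ℓ : ℕ} [hp : Fact (Nat.Prime ℓ)]

lemma piece1 (j k : Fin g) :
    ℓ * {M : Matrix (Fin g ⊕ Fin g) (Fin g ⊕ Fin g) (ZMod ℓ) |
        M ∈ GSpSet g (ZMod ℓ) ∧ M.trace = 0 ∧
        M.toBlocks₂₁ k j + M.toBlocks₂₁ j k ≠ 0}.ncard
      ≤ (GSpSet g (ZMod ℓ)).ncard := by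
  haveI : NeZero ℓ := ⟨hp.out.ne_zero⟩
  set E : Matrix (Fin g) (Fin g) (ZMod ℓ) :=
    Matrix.single j k 1 + Matrix.single k j 1 with hEdef
  have hE : Eᵀ = E := stdBasis_symm j k
  refine count_aux _ _ (fun M hM => hM.1) (fun t => uf (upN E) t)
    (uf_mul _ (upN_sq E E)) (uf_zero _)
    (fun M hM t => mem_GSp_mul_uf hM
      (uf_sympl _ (upN_sympl E hE).1 (upN_sympl E hE).2) t) ?_
  intro M hM t₁ ht₁ t₂ ht₂
  obtain ⟨-, htr₁, hnz₁⟩ := ht₁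
  obtain ⟨-, htr₂, -⟩ := ht₂
  rw [trace_mul_uf_up] at htr₁ htr₂
  rw [toBlocks21_mul_uf_up] at hnz₁
  have hs : (M.toBlocks₂₁ * E).trace = M.toBlocks₂₁ k j + M.toBlocks₂₁ j k := by
    rw [hEdef, mul_add, Matrix.trace_add, trace_mul_stdBasis, trace_mul_stdBasis]
  exact mul_right_cancel₀ (by rw [hs]; exact hnz₁) (add_left_cancel (htr₁.trans htr₂.symm))

lemma piece2 (i k : Fin g) (h2 : (2 : ZMod ℓ) ≠ 0) :
    ℓ * {M : Matrix (Fin g ⊕ Fin g) (Fin g ⊕ Fin g) (ZMod ℓ) |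
        M ∈ GSpSet g (ZMod ℓ) ∧ M.toBlocks₂₁ i k + M.toBlocks₂₁ k i = 0 ∧
        M.toBlocks₂₂ i k ≠ 0}.ncard
      ≤ (GSpSet g (ZMod ℓ)).ncard := by
  haveI : NeZero ℓ := ⟨hp.out.ne_zero⟩
  set F : Matrix (Fin g) (Fin g) (ZMod ℓ) := Matrix.single k k 1 with hFdef
  have hF : Fᵀ = F := stdBasis_diag_symm k
  refine count_aux _ _ (fun M hM => hM.1) (fun t => uf (loN F) t)
    (uf_mul _ (loN_sq F F)) (uf_zero _)
    (fun M hM t => mem_GSp_mul_uf hM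
      (uf_sympl _ (loN_sympl F hF).1 (loN_sympl F hF).2) t) ?_
  intro M hM t₁ ht₁ t₂ ht₂
  obtain ⟨-, hC₁, hnz₁⟩ := ht₁
  obtain ⟨-, hC₂, -⟩ := ht₂
  rw [toBlocks21_mul_uf_lo] at hC₁ hC₂
  rw [toBlocks22_mul_uf_lo] at hnz₁
  set C := M.toBlocks₂₁
  set D := M.toBlocks₂₂
  have e1 : ∀ t : ZMod ℓ, (C + t • (D * F)) i k + (C + t • (D * F)) k i
      = (C i k + C k i) + t * ((D * F) i k + (D * F) k i) := by
    intro t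
    simp only [Matrix.add_apply, Matrix.smul_apply, smul_eq_mul]
    ring
  rw [e1] at hC₁ hC₂
  have hkey : t₁ * ((D * F) i k + (D * F) k i) = t₂ * ((D * F) i k + (D * F) k i) := by
    linear_combination hC₁ - hC₂
  have hik : (D * F) i k = D i k := by rw [hFdef, mul_stdBasis_apply]; simp
  have hslope : (D * F) i k + (D * F) k i ≠ 0 := by
    rcases eq_or_ne i k with rfl | hne
    · rw [hik, ← two_mul]
      exact mul_ne_zero h2 hnz₁
    · have h0 : (D * F) k i = 0 := by
        rw [hFdef, mul_stdBasis_apply, if_neg hne]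
      rw [hik, h0, add_zero]
      exact hnz₁
  exact mul_right_cancel₀ hslope hkey

lemma piece3 (hg : 1 ≤ g) :
    ℓ * {M : Matrix (Fin g ⊕ Fin g) (Fin g ⊕ Fin g) (ZMod ℓ) |
        M ∈ GSpSet g (ZMod ℓ) ∧ M.toBlocks₂₂ = 0}.ncard
      ≤ (GSpSet g (ZMod ℓ)).ncard := by
  haveI : NeZero ℓ := ⟨hp.out.ne_zero⟩
  haveI : Fact (1 < ℓ) := ⟨hp.out.one_lt⟩
  set i0 : Fin g := ⟨0, hg⟩
  set E : Matrix (Fin g) (Fin g) (ZMod ℓ) := Matrix.single i0 i0 1 with hEdef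
  have hE : Eᵀ = E := stdBasis_diag_symm i0
  refine count_aux _ _ (fun M hM => hM.1) (fun t => uf (upN E) t)
    (uf_mul _ (upN_sq E E)) (uf_zero _)
    (fun M hM t => mem_GSp_mul_uf hM
      (uf_sympl _ (upN_sympl E hE).1 (upN_sympl E hE).2) t) ?_
  intro M hM t₁ ht₁ t₂ ht₂
  obtain ⟨-, hD₁⟩ := ht₁
  obtain ⟨-, hD₂⟩ := ht₂
  rw [toBlocks22_mul_uf_up] at hD₁ hD₂
  by_contra hne
  set C := M.toBlocks₂₁
  have hCE : C * E = 0 := by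
    ext a b
    have h1 := congrFun (congrFun hD₁ a) b
    have h2' := congrFun (congrFun hD₂ a) b
    simp only [Matrix.add_apply, Matrix.smul_apply, smul_eq_mul, Matrix.zero_apply] at h1 h2' ⊢
    have : (t₁ - t₂) * (C * E) a b = 0 := by linear_combination h1 - h2'
    rcases mul_eq_zero.mp this with h | h
    · exact absurd (sub_eq_zero.mp h) hne
    · exact h
  have hD : M.toBlocks₂₂ = 0 := by
    rw [hCE, smul_zero, add_zero] at hD₁
    exact hD₁
  obtain ⟨C', hC'⟩ := blocks21_inv hM hD
  have : E = 0 := by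
    calc E = (C' * C) * E := by rw [hC', one_mul]
    _ = C' * (C * E) := by rw [Matrix.mul_assoc]
    _ = 0 := by rw [hCE, Matrix.mul_zero]
  have := congrFun (congrFun this i0) i0
  simp [hEdef, Matrix.single] at this

end Pieces

end GspAux

/-- The trace-zero locus in `GSp_{2g}(𝔽_ℓ)` has proportion `O(1/ℓ)`: there is a
constant `C` depending only on `g` such that for every prime `ℓ`,
`#{M ∈ GSp_{2g}(𝔽_ℓ) : tr M = 0} ≤ C · #GSp_{2g}(𝔽_ℓ) / ℓ`. -/
theorem gsp_trace_zero_proportion (g : ℕ) (hg : 1 ≤ g) :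
    ∃ C : ℝ, 0 < C ∧ ∀ ℓ : ℕ, ℓ.Prime →
      (({M ∈ GSpSet g (ZMod ℓ) | M.trace = 0}.ncard : ℝ)
        ≤ C * ((GSpSet g (ZMod ℓ)).ncard : ℝ) / (ℓ : ℝ)) := by
  refine ⟨2 * (g : ℝ) ^ 2 + 2, by positivity, ?_⟩
  intro ℓ hℓ
  haveI : Fact ℓ.Prime := ⟨hℓ⟩
  haveI : NeZero ℓ := ⟨hℓ.ne_zero⟩
  set G := GSpSet g (ZMod ℓ) with hGdef
  set X := {M ∈ G | M.trace = 0} with hXdef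
  have hXG : X ⊆ G := fun M hM => hM.1
  have hg1 : (1 : ℝ) ≤ (g : ℝ) := by exact_mod_cast hg
  have hG0 : (0 : ℝ) ≤ (G.ncard : ℝ) := by positivity
  have hl0 : (0 : ℝ) < (ℓ : ℝ) := by exact_mod_cast hℓ.pos
  by_cases hl2 : ℓ = 2
  · have hXle : X.ncard ≤ G.ncard := Set.ncard_le_ncard hXG (Set.toFinite G)
    have hXle' : (X.ncard : ℝ) ≤ (G.ncard : ℝ) := by exact_mod_cast hXle
    have hl2' : (ℓ : ℝ) = 2 := by rw [hl2]; norm_num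
    rw [le_div_iff₀ hl0]
    nlinarith
  · have h2 : (2 : ZMod ℓ) ≠ 0 := by
      intro h
      have h' : ((2 : ℕ) : ZMod ℓ) = 0 := by exact_mod_cast h
      exact hl2 ((Nat.prime_dvd_prime_iff_eq hℓ Nat.prime_two).mp
        ((ZMod.natCast_eq_zero_iff 2 ℓ).mp h'))
    set ι := (Fin g × Fin g) ⊕ ((Fin g × Fin g) ⊕ Unit) with hidef
    set P : ι → Set (Matrix (Fin g ⊕ Fin g) (Fin g ⊕ Fin g) (ZMod ℓ)) :=
      Sum.elim
        (fun p => {M | M ∈ G ∧ M.trace = 0 ∧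
          M.toBlocks₂₁ p.2 p.1 + M.toBlocks₂₁ p.1 p.2 ≠ 0})
        (Sum.elim
          (fun p => {M | M ∈ G ∧ M.toBlocks₂₁ p.1 p.2 + M.toBlocks₂₁ p.2 p.1 = 0 ∧
            M.toBlocks₂₂ p.1 p.2 ≠ 0})
          (fun _ => {M | M ∈ G ∧ M.toBlocks₂₂ = 0})) with hPdef
    have hcov : X ⊆ ⋃ i, P i := by
      intro M hM
      by_cases hC : ∃ p : Fin g × Fin g,
          M.toBlocks₂₁ p.2 p.1 + M.toBlocks₂₁ p.1 p.2 ≠ 0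
      · obtain ⟨p, hp⟩ := hC
        exact Set.mem_iUnion.mpr ⟨Sum.inl p, hM.1, hM.2, hp⟩
      · push_neg at hC
        by_cases hD : M.toBlocks₂₂ = 0
        · exact Set.mem_iUnion.mpr ⟨Sum.inr (Sum.inr ()), hM.1, hD⟩
        · obtain ⟨i, k, hik⟩ : ∃ i k, M.toBlocks₂₂ i k ≠ 0 := by
            by_contra hcon
            push_neg at hcon
            exact hD (by ext i k; exact hcon i k)
          refine Set.mem_iUnion.mpr ⟨Sum.inr (Sum.inl (i, k)), hM.1, ?_, hik⟩
          exact hC (k, i)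
    have hP : ∀ i : ι, ℓ * (P i).ncard ≤ G.ncard := by
      rintro (p | p | u)
      · exact GspAux.piece1 p.1 p.2
      · exact GspAux.piece2 p.1 p.2 h2
      · exact GspAux.piece3 hg
    have hXsum : X.ncard ≤ ∑ i : ι, (P i).ncard := GspAux.ncard_le_sum_of_cover X P hcov
    have hmain : ℓ * X.ncard ≤ (2 * g ^ 2 + 1) * G.ncard := by
      calc ℓ * X.ncard ≤ ℓ * ∑ i : ι, (P i).ncard := Nat.mul_le_mul_left _ hXsum
        _ = ∑ i : ι, ℓ * (P i).ncard := Finset.mul_sum _ _ _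
        _ ≤ ∑ _i : ι, G.ncard := Finset.sum_le_sum fun i _ => hP i
        _ = Fintype.card ι * G.ncard := by
            rw [Finset.sum_const, smul_eq_mul, Finset.card_univ]
        _ = (2 * g ^ 2 + 1) * G.ncard := by
            congr 1
            simp [hidef]
            ring
    have hmain' : (ℓ : ℝ) * (X.ncard : ℝ) ≤ (2 * (g:ℝ) ^ 2 + 1) * (G.ncard : ℝ) := by
      exact_mod_cast hmain
    rw [le_div_iff₀ hl0]
    nlinarith
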